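/- arXiv:math/0411520 — 2 statements merged into one kernel-verified Lean document; each statement's English description precedes it below -/
import Mathlib

section
/- For an integer N ≥ 2 and positive integers k, j with k ≤ j, if d_{N,j} = c · d_{N,k} for some positive integer c, then the base-N^k expansion of c has all digits equal to 1, i.e., c = 1 + N^k + N^{2k} + ... + N^{lk} for some l ≥ 0, and consequently j = (l+1)k. -/
lemma aux_block (N k m : ℕ) :
    (∑ i ∈ Finset.range (m * k), N ^ i)
      = (∑ i ∈ Finset.range k, N ^ i) * ∑ t ∈ Finset.range m, (N ^ k) ^ t := by
  induction m with
  | zero => simp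
  | succ m ih =>
    rw [Finset.sum_range_succ, Nat.succ_mul, Finset.sum_range_add, ih, Nat.mul_add]
    congr 1
    have hx : ∀ x, N ^ (m * k + x) = N ^ x * (N ^ k) ^ m := fun x => by
      rw [← pow_mul, ← pow_add, Nat.add_comm, Nat.mul_comm]
    simp [hx, ← Finset.sum_mul]

lemma aux_coprime (N k : ℕ) (hk : 0 < k) :
    Nat.Coprime (∑ i ∈ Finset.range k, N ^ i) N := by
  obtain ⟨k, rfl⟩ := Nat.exists_eq_add_of_lt hk
  rw [Nat.zero_add, Finset.sum_range_succ']
  simp only [pow_succ, pow_zero]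
  have : (∑ i ∈ Finset.range k, N ^ i * N) = (∑ i ∈ Finset.range k, N ^ i) * N := by
    rw [Finset.sum_mul]
  rw [this]
  simp [Nat.Coprime]

/-- If `d_{N,j} = c ⬝ d_{N,k}` with `c > 0`, `N ≥ 2`, `k ≤ j`, then the base-`N^k`
expansion of `c` has all digits `1`: `c = 1 + N^k + ⋯ + N^{lk}` for some `l ≥ 0`,
and consequently `j = (l+1)k`. -/
theorem stmt_2 (N k j c : ℕ) (hN : 2 ≤ N) (hk : 0 < k) (hj : 0 < j) (hkj : k ≤ j)
    (hc : 0 < c)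
    (h : (∑ i ∈ Finset.range j, N ^ i) = c * (∑ i ∈ Finset.range k, N ^ i)) :
    ∃ l : ℕ, c = ∑ i ∈ Finset.range (l + 1), (N ^ k) ^ i ∧ j = (l + 1) * k := by
  have hdk : 0 < ∑ i ∈ Finset.range k, N ^ i := by
    apply Finset.sum_pos (fun i _ => pow_pos (by omega) i)
    exact Finset.nonempty_range_iff.mpr (by omega)
  -- first show k ∣ j
  have hdvd : k ∣ j := by
    by_contra hnd
    set q := j / k with hq
    set r := j % k with hr
    have hjqr : j = q * k + r := by
      rw [hq, hr, Nat.mul_comm]; exact (Nat.div_add_mod j k).symm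
    have hrk : r < k := Nat.mod_lt _ hk
    have hrpos : 0 < r := by
      rcases Nat.eq_zero_or_pos r with h0 | h0
      · exact absurd (Nat.dvd_of_mod_eq_zero (by rw [← hr]; exact h0)) hnd
      · exact h0
    have hsplit : (∑ i ∈ Finset.range j, N ^ i)
        = (∑ i ∈ Finset.range (q * k), N ^ i)
          + N ^ (q * k) * ∑ i ∈ Finset.range r, N ^ i := by
      rw [hjqr, Finset.sum_range_add, Finset.mul_sum]
      congr 1
      exact Finset.sum_congr rfl fun i _ => (pow_add N _ _)
    have h1 : (∑ i ∈ Finset.range k, N ^ i) ∣ (∑ i ∈ Finset.range j, N ^ i) :=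
      ⟨c, by rw [h, Nat.mul_comm]⟩
    have h2 : (∑ i ∈ Finset.range k, N ^ i) ∣ (∑ i ∈ Finset.range (q * k), N ^ i) :=
      ⟨∑ t ∈ Finset.range q, (N ^ k) ^ t, aux_block N k q⟩
    rw [hsplit] at h1
    have hdvd1 : (∑ i ∈ Finset.range k, N ^ i) ∣ N ^ (q * k) * ∑ i ∈ Finset.range r, N ^ i := by
      have := Nat.dvd_sub h1 h2
      simpa using this
    have hcop : Nat.Coprime (∑ i ∈ Finset.range k, N ^ i) (N ^ (q * k)) :=
      (aux_coprime N k hk).pow_right _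
    have hdvd2 : (∑ i ∈ Finset.range k, N ^ i) ∣ ∑ i ∈ Finset.range r, N ^ i :=
      hcop.dvd_of_dvd_mul_left hdvd1
    have hrlt : (∑ i ∈ Finset.range r, N ^ i) < ∑ i ∈ Finset.range k, N ^ i := by
      apply Finset.sum_lt_sum_of_subset (Finset.range_subset_range.mpr hrk.le) (i := r)
        (by simp [hrk]) (by simp) (pow_pos (by omega) r)
      intro i _ _
      exact Nat.zero_le _
    have hrpos' : 0 < ∑ i ∈ Finset.range r, N ^ i := by
      apply Finset.sum_pos (fun i _ => pow_pos (by omega) i)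
      exact Finset.nonempty_range_iff.mpr (by omega)
    exact absurd (Nat.le_of_dvd hrpos' hdvd2) (by omega)
  obtain ⟨m, rfl⟩ := hdvd
  have hm : 0 < m := Nat.pos_of_ne_zero fun h0 => by simp [h0] at hj
  refine ⟨m - 1, ?_, by rw [Nat.sub_add_cancel hm, Nat.mul_comm]⟩
  have hmm : m - 1 + 1 = m := by omega
  rw [hmm]
  have hb := aux_block N k m
  rw [Nat.mul_comm k m] at h
  have h2 : c * (∑ i ∈ Finset.range k, N ^ i)
      = (∑ t ∈ Finset.range m, (N ^ k) ^ t) * (∑ i ∈ Finset.range k, N ^ i) := by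
    rw [← h, hb, Nat.mul_comm]
  exact Nat.eq_of_mul_eq_mul_right hdk h2
end

section
/- If T = (T_1, ..., T_N) is a non-commutative weighted shift which is bounded below, meaning inf { λ_{i,w} : 1 ≤ i ≤ N, w ∈ F_N^+ } > 0, then each creation operator L_i lies in the C*-algebra generated by T_1, ..., T_N; specifically L_i = T_i (T_i* T_i)^{-1/2}. -/
noncomputable abbrev FockSpace (N : ℕ) := lp (fun _ : List (Fin N) => ℂ) 2

noncomputable def fockBasis {N : ℕ} (w : List (Fin N)) : FockSpace N :=
  lp.single 2 w (1 : ℂ)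

namespace FockAux
open scoped ENNReal

variable {N : ℕ}

lemma two_toReal : (2 : ℝ≥0∞).toReal = 2 := by simp

lemma summable_sq (x : FockSpace N) : Summable fun w => ‖x w‖ ^ (2:ℝ) := by
  have := (memℓp_gen_iff (p := 2) (by rw [two_toReal]; norm_num)).mp (lp.memℓp x)
  rwa [two_toReal] at this

lemma norm_sq_eq (x : FockSpace N) : ‖x‖ ^ (2:ℝ) = ∑' w, ‖x w‖ ^ (2:ℝ) := by
  have := lp.norm_rpow_eq_tsum (p := 2) (by rw [two_toReal]; norm_num) x
  rwa [two_toReal] at this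

lemma sq_bound {d : List (Fin N) → ℂ} {C : ℝ} (h : ∀ w, ‖d w‖ ≤ C) (x : FockSpace N)
    (w : List (Fin N)) : ‖d w * x w‖ ^ (2:ℝ) ≤ C^2 * ‖x w‖^(2:ℝ) := by
  calc ‖d w * x w‖ ^ (2:ℝ) = ‖d w‖^(2:ℝ) * ‖x w‖^(2:ℝ) := by
        rw [norm_mul, Real.mul_rpow (norm_nonneg _) (norm_nonneg _)]
      _ ≤ C^(2:ℝ) * ‖x w‖^(2:ℝ) := by gcongr; exact h w
      _ = C^2 * ‖x w‖^(2:ℝ) := by rw [← Real.rpow_natCast C 2]; norm_num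

lemma summable_mul_sq {d : List (Fin N) → ℂ} {C : ℝ} (h : ∀ w, ‖d w‖ ≤ C) (x : FockSpace N) :
    Summable fun w => ‖d w * x w‖ ^ (2:ℝ) :=
  Summable.of_nonneg_of_le (fun w => by positivity) (sq_bound h x)
    ((summable_sq x).mul_left (C^2))

lemma memℓp_mul {d : List (Fin N) → ℂ} {C : ℝ} (h : ∀ w, ‖d w‖ ≤ C) (x : FockSpace N) :
    Memℓp (fun w => d w * x w) 2 := by
  apply memℓp_gen
  rw [two_toReal]
  exact summable_mul_sq h x

noncomputable def diag (d : List (Fin N) → ℂ) (C : ℝ) (h : ∀ w, ‖d w‖ ≤ C) :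
    FockSpace N →L[ℂ] FockSpace N :=
  LinearMap.mkContinuous
    { toFun := fun x => ⟨fun w => d w * x w, memℓp_mul h x⟩
      map_add' := by
        intro x y; apply Subtype.ext; funext w
        show d w * (x w + y w) = d w * x w + d w * y w
        ring
      map_smul' := by
        intro c x; apply Subtype.ext; funext w
        show d w * (c * x w) = c * (d w * x w)
        ring }
    C
    (by
      intro x
      have h0 : (0:ℝ) ≤ C := le_trans (norm_nonneg _) (h [])
      refine lp.norm_le_of_tsum_le (by rw [two_toReal]; norm_num)
        (by positivity) ?_
      rw [two_toReal]
      calc ∑' w, ‖d w * x w‖ ^ (2:ℝ)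
          ≤ ∑' w, C^2 * ‖x w‖^(2:ℝ) :=
            (summable_mul_sq h x).tsum_le_tsum (sq_bound h x) ((summable_sq x).mul_left _)
          _ = C^2 * ∑' w, ‖x w‖^(2:ℝ) := tsum_mul_left
          _ = C^2 * ‖x‖^(2:ℝ) := by rw [norm_sq_eq]
          _ = (C * ‖x‖)^(2:ℝ) := by
            rw [Real.mul_rpow h0 (norm_nonneg _), ← Real.rpow_natCast C 2]; norm_num)

@[simp] lemma diag_apply (d : List (Fin N) → ℂ) (C : ℝ) (h : ∀ w, ‖d w‖ ≤ C)
    (x : FockSpace N) (w : List (Fin N)) : (diag d C h x) w = d w * x w := rfl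

lemma norm_diag_le (d : List (Fin N) → ℂ) (C : ℝ) (h : ∀ w, ‖d w‖ ≤ C) :
    ‖diag d C h‖ ≤ C :=
  LinearMap.mkContinuous_norm_le _ (le_trans (norm_nonneg _) (h [])) _

end FockAux

namespace FockAux
open Function
variable {N : ℕ}

def creFun (i : Fin N) (x : List (Fin N) → ℂ) : List (Fin N) → ℂ
  | [] => 0
  | j :: w => if j = i then x w else 0

@[simp] lemma creFun_cons (i : Fin N) (x : List (Fin N) → ℂ) (w : List (Fin N)) :
    creFun i x (i :: w) = x w := by simp [creFun]

lemma creFun_eq_zero (i : Fin N) (x : List (Fin N) → ℂ) {v : List (Fin N)}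
    (hv : v ∉ Set.range (List.cons i)) : creFun i x v = 0 := by
  match v with
  | [] => rfl
  | j :: w =>
    have : j ≠ i := by rintro rfl; exact hv ⟨w, rfl⟩
    simp [creFun, this]

lemma summable_creFun_sq (i : Fin N) (x : FockSpace N) :
    Summable fun v => ‖creFun i (⇑x) v‖ ^ (2:ℝ) := by
  refine ((List.cons_injective (a := i)).summable_iff (fun v hv => ?_)).mp
    ((summable_sq x).congr (fun w => by simp))
  rw [creFun_eq_zero i _ hv]
  simp [Real.zero_rpow]

lemma tsum_creFun_sq (i : Fin N) (x : FockSpace N) :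
    ∑' v, ‖creFun i (⇑x) v‖ ^ (2:ℝ) = ‖x‖ ^ (2:ℝ) := by
  rw [norm_sq_eq]
  rw [← Function.Injective.tsum_eq (g := List.cons i) List.cons_injective (f := fun v => ‖creFun i (⇑x) v‖ ^ (2:ℝ))]
  · exact tsum_congr fun w => by simp
  · intro v hv
    by_contra hnot
    apply hv
    show ‖creFun i (⇑x) v‖ ^ (2:ℝ) = 0
    rw [creFun_eq_zero i _ hnot]
    simp [Real.zero_rpow]

lemma memℓp_creFun (i : Fin N) (x : FockSpace N) : Memℓp (creFun i (⇑x)) 2 := by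
  apply memℓp_gen
  rw [two_toReal]
  exact summable_creFun_sq i x

noncomputable def creation (i : Fin N) : FockSpace N →L[ℂ] FockSpace N :=
  LinearMap.mkContinuous
    { toFun := fun x => ⟨creFun i (⇑x), memℓp_creFun i x⟩
      map_add' := by
        intro x y; apply Subtype.ext; funext v
        match v with
        | [] => show (0:ℂ) = 0 + 0; simp
        | j :: w =>
          show creFun i _ (j::w) = creFun i (⇑x) (j::w) + creFun i (⇑y) (j::w)
          by_cases hj : j = i <;> simp [creFun, hj]
      map_smul' := by
        intro c x; apply Subtype.ext; funext v
        match v with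
        | [] => show (0:ℂ) = c * 0; simp
        | j :: w =>
          show creFun i _ (j::w) = c * creFun i (⇑x) (j::w)
          by_cases hj : j = i <;> simp [creFun, hj] }
    1
    (by
      intro x
      refine lp.norm_le_of_tsum_le (by rw [two_toReal]; norm_num) (by positivity) ?_
      rw [two_toReal]
      calc (∑' v, ‖creFun i (⇑x) v‖ ^ (2:ℝ)) = ‖x‖ ^ (2:ℝ) := tsum_creFun_sq i x
        _ ≤ (1 * ‖x‖) ^ (2:ℝ) := by rw [one_mul])

@[simp] lemma creation_apply (i : Fin N) (x : FockSpace N) (v : List (Fin N)) :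
    (creation i x) v = creFun i (⇑x) v := rfl

lemma summable_ann_sq (i : Fin N) (x : FockSpace N) :
    Summable fun w => ‖x (i :: w)‖ ^ (2:ℝ) :=
  (summable_sq x).comp_injective List.cons_injective

lemma memℓp_ann (i : Fin N) (x : FockSpace N) : Memℓp (fun w => x (i :: w)) 2 := by
  apply memℓp_gen
  rw [two_toReal]
  exact summable_ann_sq i x

noncomputable def annihilation (i : Fin N) : FockSpace N →L[ℂ] FockSpace N :=
  LinearMap.mkContinuous
    { toFun := fun x => ⟨fun w => x (i :: w), memℓp_ann i x⟩
      map_add' := by intro x y; apply Subtype.ext; funext w; rfl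
      map_smul' := by intro c x; apply Subtype.ext; funext w; rfl }
    1
    (by
      intro x
      refine lp.norm_le_of_tsum_le (by rw [two_toReal]; norm_num) (by positivity) ?_
      rw [two_toReal]
      calc (∑' w, ‖x (i :: w)‖ ^ (2:ℝ)) ≤ ∑' v, ‖x v‖ ^ (2:ℝ) := by
            refine (summable_ann_sq i x).tsum_le_tsum_of_inj (List.cons i) List.cons_injective
              (fun c _ => by positivity) (fun w => le_refl _)
              (summable_sq x)
        _ = ‖x‖ ^ (2:ℝ) := (norm_sq_eq x).symm
        _ ≤ (1 * ‖x‖) ^ (2:ℝ) := by rw [one_mul])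

@[simp] lemma annihilation_apply (i : Fin N) (x : FockSpace N) (w : List (Fin N)) :
    (annihilation i x) w = x (i :: w) := rfl

end FockAux

namespace FockAux
variable {N : ℕ}

open ComplexConjugate

lemma fockBasis_apply (w v : List (Fin N)) :
    (fockBasis w : FockSpace N) v = if v = w then 1 else 0 := by
  rw [fockBasis, lp.single_apply]
  split <;> simp_all

lemma diag_fockBasis (d : List (Fin N) → ℂ) (C : ℝ) (h : ∀ w, ‖d w‖ ≤ C)
    (w : List (Fin N)) : diag d C h (fockBasis w) = d w • fockBasis w := by
  apply Subtype.ext; funext v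
  show d v * (fockBasis w : FockSpace N) v = d w * (fockBasis w : FockSpace N) v
  rw [fockBasis_apply]
  by_cases hv : v = w <;> simp [hv]

lemma diag_congr {d d' : List (Fin N) → ℂ} {C C' : ℝ} {h : ∀ w, ‖d w‖ ≤ C}
    {h' : ∀ w, ‖d' w‖ ≤ C'} (hd : ∀ w, d w = d' w) : diag d C h = diag d' C' h' := by
  ext x w
  show d w * x w = d' w * x w
  rw [hd]

lemma creation_fockBasis (i : Fin N) (w : List (Fin N)) :
    creation i (fockBasis w) = fockBasis (i :: w) := by
  apply Subtype.ext; funext v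
  rw [creation_apply, fockBasis_apply]
  match v with
  | [] => simp [creFun]
  | j :: u =>
    by_cases hj : j = i
    · subst hj
      rw [creFun_cons, fockBasis_apply]
      by_cases hu : u = w <;> simp [hu]
    · have : (j :: u) ≠ (i :: w) := by simp [hj]
      simp [creFun, hj, this]

lemma annihilation_cons_fockBasis (i : Fin N) (w : List (Fin N)) :
    annihilation i (fockBasis (i :: w)) = fockBasis w := by
  apply Subtype.ext; funext u
  rw [annihilation_apply, fockBasis_apply, fockBasis_apply]
  by_cases hu : u = w <;> simp [hu]

lemma ext_fockBasis {B₁ B₂ : FockSpace N →L[ℂ] FockSpace N}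
    (h : ∀ w, B₁ (fockBasis w) = B₂ (fockBasis w)) : B₁ = B₂ := by
  refine ContinuousLinearMap.ext fun x => ?_
  have hs := lp.hasSum_single (E := fun _ : List (Fin N) => ℂ) (p := 2) (by norm_num) x
  have key : ∀ (B : FockSpace N →L[ℂ] FockSpace N),
      HasSum (fun w => x w • B (fockBasis w)) (B x) := by
    intro B
    have h1 := hs.mapL B
    refine h1.congr_fun fun w => ?_
    have : lp.single 2 w (x w) = x w • (fockBasis w : FockSpace N) := by
      rw [fockBasis, ← lp.single_smul]
      norm_num
    rw [this, map_smul]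
  have h2 : HasSum (fun w => x w • B₂ (fockBasis w)) (B₂ x) := key B₂
  have h1 : HasSum (fun w => x w • B₂ (fockBasis w)) (B₁ x) :=
    (key B₁).congr_fun fun w => by rw [h w]
  exact h1.unique h2

end FockAux

namespace FockAux
variable {N : ℕ}
open ComplexConjugate ContinuousLinearMap

local notation "⟪" x ", " y "⟫" => @inner ℂ _ _ x y

lemma adjoint_creation (i : Fin N) :
    ContinuousLinearMap.adjoint (creation i) = annihilation i := by
  symm
  rw [ContinuousLinearMap.eq_adjoint_iff]
  intro x y
  rw [lp.inner_eq_tsum, lp.inner_eq_tsum]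
  rw [← Function.Injective.tsum_eq (g := List.cons i) List.cons_injective
    (f := fun v => ⟪x v, (creation i y) v⟫)]
  · exact tsum_congr fun w => by simp [RCLike.inner_apply]
  · intro v hv
    by_contra hnot
    apply hv
    show ⟪x v, (creation i y) v⟫ = 0
    rw [creation_apply, creFun_eq_zero i _ hnot, inner_zero_right]

lemma adjoint_diag (d : List (Fin N) → ℂ) (C : ℝ) (h : ∀ w, ‖d w‖ ≤ C) :
    ContinuousLinearMap.adjoint (diag d C h) =
      diag (fun w => conj (d w)) C (fun w => by simpa using h w) := by
  symm
  rw [ContinuousLinearMap.eq_adjoint_iff]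
  intro x y
  rw [lp.inner_eq_tsum, lp.inner_eq_tsum]
  refine tsum_congr fun w => ?_
  show ⟪conj (d w) * x w, y w⟫ = ⟪x w, d w * y w⟫
  simp only [RCLike.inner_apply, map_mul]
  simp only [RingHomCompTriple.comp_apply, RingHom.id_apply, Complex.conj_conj]
  ring

lemma pow_eigen (B : FockSpace N →L[ℂ] FockSpace N) (m : ℂ) (ξ : FockSpace N)
    (hB : B ξ = m • ξ) (n : ℕ) : (B ^ n) ξ = m ^ n • ξ := by
  induction n with
  | zero => simp
  | succ n ih =>
    rw [pow_succ, ContinuousLinearMap.mul_apply, hB, map_smul, ih, smul_smul, pow_succ]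
    ring_nf

lemma aeval_eigen (B : FockSpace N →L[ℂ] FockSpace N) (m : ℂ) (ξ : FockSpace N)
    (hB : B ξ = m • ξ) (q : Polynomial ℂ) :
    (Polynomial.aeval B q) ξ = q.eval m • ξ := by
  induction q using Polynomial.induction_on' with
  | add p q hp hq => simp [ContinuousLinearMap.add_apply, hp, hq, add_smul]
  | monomial n c =>
    rw [Polynomial.aeval_monomial, Polynomial.eval_monomial, ContinuousLinearMap.mul_apply,
      pow_eigen B m ξ hB n]
    simp [Algebra.algebraMap_eq_smul_one, smul_smul, mul_comm]

end FockAux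

set_option maxHeartbeats 2000000 in
open ContinuousLinearMap in
/-- If a weighted shift `T = (T_1,…,T_N)` is bounded below, that is
`inf { λ_{i,w} } > 0`, then each creation operator `L_i` lies in the C*-algebra
generated by `T_1,…,T_N`; specifically `L_i = T_i (T_i* T_i)^{-1/2}`, i.e.
`L_i = T_i V` where `V` is the positive operator with `(T_i* T_i)(V V) = 1`. -/
theorem stmt_10 (N : ℕ) (hN : 2 ≤ N)
    (T L : Fin N → FockSpace N →L[ℂ] FockSpace N) (lam : Fin N → List (Fin N) → ℝ)
    (hbdd : ∃ C, ∀ i w, lam i w ≤ C)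
    (hbelow : ∃ ε > (0 : ℝ), ∀ i w, ε ≤ lam i w)
    (hT : ∀ i w, T i (fockBasis w) = (lam i w : ℂ) • fockBasis (i :: w))
    (hL : ∀ i w, L i (fockBasis w) = fockBasis (i :: w)) :
    ∀ i, L i ∈ (StarAlgebra.adjoin ℂ (Set.range T)).topologicalClosure ∧
      ∃ V : FockSpace N →L[ℂ] FockSpace N, V.IsPositive ∧
        (adjoint (T i) * T i) * (V * V) = 1 ∧ L i = T i * V := by
  obtain ⟨C, hC⟩ := hbdd
  obtain ⟨ε, hε, hεle⟩ := hbelow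
  intro i
  have hμpos : ∀ w, 0 < lam i w := fun w => lt_of_lt_of_le hε (hεle i w)
  have hμC : ∀ w, lam i w ≤ C := fun w => hC i w
  have hC0 : 0 < C := lt_of_lt_of_le (hμpos []) (hμC [])
  have hd : ∀ w, ‖((lam i w : ℝ) : ℂ)‖ ≤ C := fun w => by
    rw [Complex.norm_real, Real.norm_eq_abs, abs_of_pos (hμpos w)]; exact hμC w
  set D := FockAux.diag (fun w => ((lam i w : ℝ) : ℂ)) C hd with hD
  have hdV : ∀ w, ‖(((lam i w)⁻¹ : ℝ) : ℂ)‖ ≤ ε⁻¹ := fun w => by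
    rw [Complex.norm_real, Real.norm_eq_abs, abs_of_pos (inv_pos.mpr (hμpos w))]
    exact one_div (lam i w) ▸ one_div ε ▸ one_div_le_one_div_of_le hε (hεle i w)
  set V := FockAux.diag (fun w => (((lam i w)⁻¹ : ℝ) : ℂ)) ε⁻¹ hdV with hV
  have hDb : ∀ w, D (fockBasis w) = ((lam i w : ℝ) : ℂ) • fockBasis w :=
    fun w => FockAux.diag_fockBasis _ _ _ w
  have hVb : ∀ w, V (fockBasis w) = (((lam i w)⁻¹ : ℝ) : ℂ) • fockBasis w :=
    fun w => FockAux.diag_fockBasis _ _ _ w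
  have hTi : T i = (FockAux.creation i).comp D := by
    apply FockAux.ext_fockBasis; intro w
    rw [hT i w, comp_apply, hDb w, map_smul, FockAux.creation_fockBasis]
  have hLi : L i = FockAux.creation i := by
    apply FockAux.ext_fockBasis; intro w
    rw [hL i w, FockAux.creation_fockBasis]
  have hadjT : adjoint (T i) = D.comp (FockAux.annihilation i) := by
    rw [hTi, ContinuousLinearMap.adjoint_comp, FockAux.adjoint_creation,
      FockAux.adjoint_diag]
    congr 1
    exact FockAux.diag_congr fun w => Complex.conj_ofReal _
  have hAb : ∀ w, (adjoint (T i) * T i) (fockBasis w) =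
      (((lam i w)^2 : ℝ) : ℂ) • fockBasis w := by
    intro w
    rw [ContinuousLinearMap.mul_apply, hT i w, map_smul, hadjT, comp_apply,
      FockAux.annihilation_cons_fockBasis, hDb w, smul_smul]
    congr 1; push_cast; ring
  have hμne : ∀ w, ((lam i w : ℝ) : ℂ) ≠ 0 := fun w => by
    exact_mod_cast (hμpos w).ne'
  have hone : (adjoint (T i) * T i) * (V * V) = 1 := by
    apply FockAux.ext_fockBasis; intro w
    have h2 : (V * V) (fockBasis w) =
        ((((lam i w)⁻¹:ℝ):ℂ) * (((lam i w)⁻¹:ℝ):ℂ)) • fockBasis w := by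
      rw [ContinuousLinearMap.mul_apply, hVb w, map_smul, hVb w, smul_smul]
    rw [ContinuousLinearMap.mul_apply, h2, map_smul, hAb w, smul_smul, ContinuousLinearMap.one_apply]
    have h3 : ((((lam i w)⁻¹:ℝ):ℂ) * (((lam i w)⁻¹:ℝ):ℂ) * (((lam i w)^2:ℝ):ℂ)) = 1 := by
      push_cast
      field_simp
      exact div_self (hμne w)
    rw [h3, one_smul]
  have hTV : L i = T i * V := by
    apply FockAux.ext_fockBasis; intro w
    rw [hL i w, ContinuousLinearMap.mul_apply, hVb w, map_smul, hT i w, smul_smul]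
    have h3 : ((((lam i w)⁻¹:ℝ):ℂ) * (((lam i w):ℝ):ℂ)) = 1 := by
      push_cast
      exact inv_mul_cancel₀ (hμne w)
    rw [h3, one_smul]
  have hVpos : V.IsPositive := by
    rw [ContinuousLinearMap.isPositive_def']
    constructor
    · show star V = V
      rw [star_eq_adjoint, hV, FockAux.adjoint_diag]
      exact FockAux.diag_congr fun w => Complex.conj_ofReal _
    · intro x
      rw [ContinuousLinearMap.reApplyInnerSelf_apply]
      rw [lp.inner_eq_tsum]
      have hsum := lp.summable_inner (𝕜 := ℂ) (V x) x
      have hterm : ∀ w, (@inner ℂ _ _ ((V x) w) (x w)) =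
          (((lam i w)⁻¹ * Complex.normSq (x w) : ℝ) : ℂ) := by
        intro w
        have hVxw : (V x) w = (((lam i w)⁻¹ : ℝ) : ℂ) * x w := rfl
        rw [RCLike.inner_apply, hVxw, map_mul, Complex.conj_ofReal, mul_left_comm,
          Complex.mul_conj]
        push_cast
        ring
      rw [tsum_congr hterm]
      have hs2 : Summable fun w => (((lam i w)⁻¹ * Complex.normSq (x w) : ℝ) : ℂ) :=
        hsum.congr hterm
      refine (RCLike.hasSum_re (𝕜 := ℂ) hs2.hasSum).nonneg fun w => ?_
      simp only [RCLike.re_to_complex, Complex.ofReal_re]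
      have h1 := Complex.normSq_nonneg (x w)
      have h2 := (hμpos w).le
      positivity
  have hTmem : T i ∈ StarAlgebra.adjoin ℂ (Set.range T) :=
    StarAlgebra.subset_adjoin ℂ _ (Set.mem_range_self i)
  have hAmem : adjoint (T i) * T i ∈ StarAlgebra.adjoin ℂ (Set.range T) :=
    mul_mem (by rw [← star_eq_adjoint]; exact star_mem hTmem) hTmem
  have hVmemcl : V ∈ (StarAlgebra.adjoin ℂ (Set.range T)).topologicalClosure := by
    rw [← SetLike.mem_coe, StarSubalgebra.topologicalClosure_coe]
    rw [Metric.mem_closure_iff]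
    intro δ hδ
    have hcont : ContinuousOn (fun t : ℝ => (Real.sqrt t)⁻¹) (Set.Icc (ε^2) (C^2)) := by
      apply ContinuousOn.inv₀ Real.continuous_sqrt.continuousOn
      intro t ht
      have h0t : 0 < t := lt_of_lt_of_le (by positivity) ht.1
      exact (Real.sqrt_pos.mpr h0t).ne'
    obtain ⟨p, hp⟩ := exists_polynomial_near_of_continuousOn (ε^2) (C^2) _ hcont (δ/2)
      (by linarith)
    set q := p.map (algebraMap ℝ ℂ) with hq
    refine ⟨Polynomial.aeval (adjoint (T i) * T i) q, ?_, ?_⟩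
    · have h1 : Polynomial.aeval (adjoint (T i) * T i) q ∈
          Algebra.adjoin ℂ {adjoint (T i) * T i} := by
        rw [Algebra.adjoin_singleton_eq_range_aeval]; exact ⟨q, rfl⟩
      have h2 : Algebra.adjoin ℂ {adjoint (T i) * T i} ≤
          (StarAlgebra.adjoin ℂ (Set.range T)).toSubalgebra :=
        Algebra.adjoin_le (Set.singleton_subset_iff.mpr hAmem)
      exact h2 h1
    · rw [dist_eq_norm]
      have hqb : ∀ w, (Polynomial.aeval (adjoint (T i) * T i) q) (fockBasis w) =
          ((p.eval ((lam i w)^2) : ℝ) : ℂ) • fockBasis w := by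
        intro w
        rw [FockAux.aeval_eigen _ _ _ (hAb w) q]
        congr 1
        rw [hq, Polynomial.eval_map]
        have : (((lam i w)^2 : ℝ) : ℂ) = algebraMap ℝ ℂ ((lam i w)^2) := rfl
        rw [this, Polynomial.eval₂_at_apply]
        rfl
      have he : ∀ w, ‖(((lam i w)⁻¹ : ℝ) : ℂ) - ((p.eval ((lam i w)^2) : ℝ) : ℂ)‖ ≤ δ/2 := by
        intro w
        rw [← Complex.ofReal_sub, Complex.norm_real, Real.norm_eq_abs]
        have hmem : (lam i w)^2 ∈ Set.Icc (ε^2) (C^2) :=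
          ⟨pow_le_pow_left₀ hε.le (hεle i w) 2, pow_le_pow_left₀ (hμpos w).le (hμC w) 2⟩
        have h1 := hp _ hmem
        rw [Real.sqrt_sq (hμpos w).le] at h1
        rw [abs_sub_comm]
        linarith [le_of_lt h1]
      have hVq : V - Polynomial.aeval (adjoint (T i) * T i) q =
          FockAux.diag (fun w => (((lam i w)⁻¹ : ℝ) : ℂ) -
            ((p.eval ((lam i w)^2) : ℝ) : ℂ)) (δ/2) he := by
        apply FockAux.ext_fockBasis; intro w
        rw [sub_apply, hVb w, hqb w, FockAux.diag_fockBasis, sub_smul]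
      rw [hVq]
      exact lt_of_le_of_lt (FockAux.norm_diag_le _ _ _) (by linarith)
  have hLmem : L i ∈ (StarAlgebra.adjoin ℂ (Set.range T)).topologicalClosure := by
    rw [hTV]
    exact mul_mem (StarSubalgebra.le_topologicalClosure _ hTmem) hVmemcl
  exact ⟨hLmem, V, hVpos, hone, hTV⟩
end
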